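/- Let p be a prime and let L(p²) = { [[1,0],[x,1]] : x mod p² } ∪ { [[0,-1],[1,py]] : y mod p }. For any function F on ℤ^{2×2} for which the sums converge absolutely, Σ_{A ∈ L(p²)} Σ_{λ ∈ M} F(ᵗA λ) = Σ_{λ ∈ ℤ^{2×2}} F(λ) + (p-1) Σ_{λ ∈ ℤ^{2×2}} F(λ·diag(p,1)) + p² Σ_{λ ∈ ℤ^{2×2}} F(λ·diag(p²,1)), where M = { λ ∈ ℤ^{2×2} : λ₁₁ ∈ p²ℤ }. -/

import Mathlib

open Matrix

/-- The set `L(p²) = { [[1,0],[x,1]] : x mod p² } ∪ { [[0,-1],[1,py]] : y mod p }`,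
indexed by `Fin (p² + p)`. -/
def Lp2 (p : ℕ) : Fin (p ^ 2 + p) → Matrix (Fin 2) (Fin 2) ℤ :=
  fun i => if (i : ℕ) < p ^ 2 then !![1, 0; (i : ℤ), 1]
    else !![0, -1; 1, (p : ℤ) * ((i : ℤ) - (p : ℤ) ^ 2)]

abbrev M2 := Matrix (Fin 2) (Fin 2) ℤ

/-- The condition on `μ` (with `a = μ 0 0`, `b = μ 1 0`) that the `x`-th element of `L(p²)`
contributes: `p² ∣ (ᵗA⁻¹ μ)₀₀`. -/
def Ct (p x : ℕ) (a b : ℤ) : Prop :=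
  if x < p ^ 2 then (p:ℤ) ^ 2 ∣ a - (x:ℤ) * b
  else (p:ℤ) ^ 2 ∣ (p:ℤ) * ((x:ℤ) - (p:ℤ) ^ 2) * a - b

lemma t2 (a b c d : ℤ) : (!![a, b; c, d])ᵀ = !![a, c; b, d] := by
  ext i j; fin_cases i <;> fin_cases j <;> rfl

lemma mulL00 (t00 t01 t10 t11 : ℤ) (l : M2) :
    (!![t00, t01; t10, t11] * l) 0 0 = t00 * l 0 0 + t01 * l 1 0 := by
  simp [Matrix.mul_apply, Fin.sum_univ_two]

lemma mulL10 (t00 t01 t10 t11 : ℤ) (l : M2) :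
    (!![t00, t01; t10, t11] * l) 1 0 = t10 * l 0 0 + t11 * l 1 0 := by
  simp [Matrix.mul_apply, Fin.sum_univ_two]

lemma summable_ite {F : M2 → ℂ} (hF : Summable F) (Q : M2 → Prop) [DecidablePred Q] :
    Summable (fun μ : M2 => if Q μ then F μ else 0) :=
  (hF.indicator {μ | Q μ}).congr fun μ => by
    by_cases h : Q μ <;> simp [Set.indicator, Set.mem_setOf_eq, h]

open Classical in
lemma tsum_transform (F : M2 → ℂ) (T B : M2) (hBT : B * T = 1) (hTB : T * B = 1)
    (P Q : M2 → Prop)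
    (hPQ : ∀ l : M2, P l ↔ Q (T * l)) :
    (∑' lam : {l : M2 // P l}, F (T * lam.1)) = ∑' μ : M2, if Q μ then F μ else 0 := by
  have hinj : Function.Injective (fun l : {l : M2 // P l} => T * l.1) := by
    intro x y hxy
    have h2 : B * (T * x.1) = B * (T * y.1) := by
      simp only at hxy; rw [hxy]
    rw [← Matrix.mul_assoc, ← Matrix.mul_assoc, hBT, Matrix.one_mul, Matrix.one_mul] at h2
    exact Subtype.ext h2
  have hsupp : Function.support (fun μ : M2 => if Q μ then F μ else 0) ⊆
      Set.range (fun l : {l : M2 // P l} => T * l.1) := by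
    intro μ hμ
    have hQ : Q μ := by
      by_contra h
      rw [Function.mem_support, if_neg h] at hμ
      exact hμ rfl
    have hTBμ : T * (B * μ) = μ := by rw [← Matrix.mul_assoc, hTB, Matrix.one_mul]
    exact ⟨⟨B * μ, (hPQ (B * μ)).mpr (by rwa [hTBμ])⟩, hTBμ⟩
  calc (∑' lam : {l : M2 // P l}, F (T * lam.1))
      = ∑' lam : {l : M2 // P l}, (if Q (T * lam.1) then F (T * lam.1) else 0) :=
        tsum_congr fun l => by rw [if_pos ((hPQ l.1).mp l.2)]
    _ = _ := hinj.tsum_eq hsupp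

open Classical in
lemma inner_eq (p : ℕ) (F : M2 → ℂ) (i : Fin (p ^ 2 + p)) :
    (∑' lam : {l : M2 // (p:ℤ) ^ 2 ∣ l 0 0}, F ((Lp2 p i)ᵀ * lam.1))
      = ∑' μ : M2, if Ct p (i : ℕ) (μ 0 0) (μ 1 0) then F μ else 0 := by
  classical
  by_cases hi : (i : ℕ) < p ^ 2
  · have hT : (Lp2 p i)ᵀ = !![1, (i:ℤ); 0, 1] := by rw [Lp2, if_pos hi, t2]
    rw [hT]
    refine tsum_transform F _ !![1, -(i:ℤ); 0, 1] ?_ ?_ _ _ ?_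
    · rw [Matrix.mul_fin_two, Matrix.one_fin_two]; norm_num
    · rw [Matrix.mul_fin_two, Matrix.one_fin_two]; norm_num
    · intro l
      simp only [Ct, if_pos hi, mulL00, mulL10]
      have h : 1 * l 0 0 + (i:ℤ) * l 1 0 - (i:ℤ) * (0 * l 0 0 + 1 * l 1 0) = l 0 0 := by ring
      rw [h]
  · have hT : (Lp2 p i)ᵀ = !![0, 1; -1, (p:ℤ) * ((i:ℤ) - (p:ℤ) ^ 2)] := by
      rw [Lp2, if_neg hi, t2]
    rw [hT]
    set c : ℤ := (p:ℤ) * ((i:ℤ) - (p:ℤ) ^ 2) with hc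
    refine tsum_transform F _ !![c, -1; 1, 0] ?_ ?_ _ _ ?_
    · rw [Matrix.mul_fin_two, Matrix.one_fin_two]; norm_num
    · rw [Matrix.mul_fin_two, Matrix.one_fin_two]; norm_num
    · intro l
      simp only [Ct, if_neg hi, mulL00, mulL10]
      have h : c * (0 * l 0 0 + 1 * l 1 0) - (-1 * l 0 0 + c * l 1 0) = l 0 0 := by ring
      rw [h]

open Classical in
lemma tsum_diag (F : M2 → ℂ) (d : ℤ) (hd : d ≠ 0) :
    (∑' lam : M2, F (lam * !![d, 0; 0, 1]))
      = ∑' μ : M2, if d ∣ μ 0 0 ∧ d ∣ μ 1 0 then F μ else 0 := by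
  classical
  have hent0 : ∀ (l : M2) (i : Fin 2), (l * !![d, 0; 0, 1]) i 0 = l i 0 * d := by
    intro l i; simp [Matrix.mul_apply, Fin.sum_univ_two]
  have hent1 : ∀ (l : M2) (i : Fin 2), (l * !![d, 0; 0, 1]) i 1 = l i 1 := by
    intro l i; simp [Matrix.mul_apply, Fin.sum_univ_two]
  have hinj : Function.Injective (fun l : M2 => l * !![d, 0; 0, 1]) := by
    intro x y hxy
    simp only at hxy
    ext i j
    fin_cases j
    · have h0 : (x * !![d, 0; 0, 1]) i 0 = (y * !![d, 0; 0, 1]) i 0 := by rw [hxy]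
      rw [hent0, hent0] at h0
      exact mul_right_cancel₀ hd h0
    · have h1 : (x * !![d, 0; 0, 1]) i 1 = (y * !![d, 0; 0, 1]) i 1 := by rw [hxy]
      rw [hent1, hent1] at h1
      exact h1
  have hsupp : Function.support (fun μ : M2 => if d ∣ μ 0 0 ∧ d ∣ μ 1 0 then F μ else 0) ⊆
      Set.range (fun l : M2 => l * !![d, 0; 0, 1]) := by
    intro μ hμ
    have hQ : d ∣ μ 0 0 ∧ d ∣ μ 1 0 := by
      by_contra h
      rw [Function.mem_support, if_neg h] at hμ
      exact hμ rfl
    refine ⟨Matrix.of ![![μ 0 0 / d, μ 0 1], ![μ 1 0 / d, μ 1 1]], ?_⟩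
    ext i j
    fin_cases i <;> fin_cases j <;>
      simp [hent0, hent1, Int.ediv_mul_cancel hQ.1, Int.ediv_mul_cancel hQ.2]
  calc (∑' lam : M2, F (lam * !![d, 0; 0, 1]))
      = ∑' lam : M2, (if d ∣ (lam * !![d, 0; 0, 1]) 0 0 ∧ d ∣ (lam * !![d, 0; 0, 1]) 1 0
          then F (lam * !![d, 0; 0, 1]) else 0) :=
        tsum_congr fun l => by
          rw [if_pos ⟨by rw [hent0]; exact dvd_mul_left d _, by rw [hent0]; exact dvd_mul_left d _⟩]
    _ = _ := hinj.tsum_eq hsupp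

lemma isUnit_cast {n : ℕ} {b : ℤ} (h : IsCoprime b (n:ℤ)) : IsUnit ((b : ZMod n)) := by
  obtain ⟨u, v, huv⟩ := h
  apply IsUnit.of_mul_eq_one ((u : ZMod n))
  have h1 : (((u * b + v * n : ℤ)) : ZMod n) = 1 := by rw [huv]; exact Int.cast_one
  push_cast at h1
  rw [ZMod.natCast_self, mul_zero, add_zero] at h1
  rw [mul_comm]; exact h1

lemma count_unique (n : ℕ) [NeZero n] (α β : ℤ) (h : IsUnit ((β : ZMod n))) :
    (∑ x ∈ Finset.range n, if (n:ℤ) ∣ α - (x:ℤ) * β then 1 else 0 : ℕ) = 1 := by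
  classical
  set u := h.unit with hu
  set c : ZMod n := ((α : ZMod n)) * ↑u⁻¹ with hc
  have hβ : (β : ZMod n) = ↑u := h.unit_spec.symm
  have hiff : ∀ x ∈ Finset.range n, ((n:ℤ) ∣ α - (x:ℤ) * β ↔ x = c.val) := by
    intro x hx
    rw [Finset.mem_range] at hx
    have h1 : ((n:ℤ) ∣ α - (x:ℤ) * β) ↔ ((x : ZMod n) * (β : ZMod n) = (α : ZMod n)) := by
      rw [← ZMod.intCast_zmod_eq_zero_iff_dvd]
      push_cast
      rw [sub_eq_zero, eq_comm]
    have h2 : ((x : ZMod n) * (β : ZMod n) = (α : ZMod n)) ↔ ((x : ZMod n) = c) := by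
      constructor
      · intro hh; rw [hc, ← hh, hβ, mul_assoc, Units.mul_inv, mul_one]
      · intro hh; rw [hh, hc, hβ, mul_assoc, Units.inv_mul, mul_one]
    have h3 : ((x : ZMod n) = c) ↔ x = c.val := by
      constructor
      · intro hh; rw [← hh, ZMod.val_cast_of_lt hx]
      · intro hh; rw [hh]; exact ZMod.natCast_rightInverse c
    rw [h1, h2, h3]
  calc (∑ x ∈ Finset.range n, if (n:ℤ) ∣ α - (x:ℤ) * β then 1 else 0 : ℕ)
      = ∑ x ∈ Finset.range n, if x = c.val then 1 else 0 :=
        Finset.sum_congr rfl fun x hx => by simp only [hiff x hx]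
    _ = 1 := by
        rw [Finset.sum_ite_eq' (Finset.range n) c.val (fun _ => 1)]
        rw [if_pos (Finset.mem_range.mpr (ZMod.val_lt c))]

lemma sum_range_mul_periodic (g : ℕ → ℕ) (q k : ℕ) (hg : ∀ x, g (x + q) = g x) :
    ∑ x ∈ Finset.range (k * q), g x = k * ∑ x ∈ Finset.range q, g x := by
  have hm : ∀ m x, g (x + m * q) = g x := by
    intro m
    induction m with
    | zero => intro x; simp
    | succ m ihm =>
      intro x
      have : x + (m + 1) * q = (x + m * q) + q := by ring
      rw [this, hg, ihm]
  induction k with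
  | zero => simp
  | succ k ih =>
    rw [Nat.succ_mul, Finset.sum_range_add, ih]
    have : ∑ x ∈ Finset.range q, g (k * q + x) = ∑ x ∈ Finset.range q, g x :=
      Finset.sum_congr rfl fun x _ => by rw [add_comm, hm]
    rw [this]; ring

lemma count_total (p : ℕ) (hp : p.Prime) (a b : ℤ) :
    ((∑ x ∈ Finset.range (p ^ 2), if (p:ℤ) ^ 2 ∣ a - (x:ℤ) * b then 1 else 0) +
        ∑ y ∈ Finset.range p, if (p:ℤ) ^ 2 ∣ (p:ℤ) * (y:ℤ) * a - b then 1 else 0 : ℕ)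
      = 1 + (if (p:ℤ) ∣ a ∧ (p:ℤ) ∣ b then p - 1 else 0)
          + (if (p:ℤ) ^ 2 ∣ a ∧ (p:ℤ) ^ 2 ∣ b then p ^ 2 else 0) := by
  classical
  have hp0 : (p:ℤ) ≠ 0 := by exact_mod_cast hp.pos.ne'
  have hpp : Prime (p:ℤ) := Nat.prime_iff_prime_int.mp hp
  haveI : NeZero p := ⟨hp.pos.ne'⟩
  haveI : NeZero (p ^ 2) := ⟨pow_ne_zero 2 hp.pos.ne'⟩
  have hple : 1 ≤ p := hp.one_lt.le
  by_cases hb : (p:ℤ) ∣ b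
  · obtain ⟨b1, rfl⟩ := hb
    by_cases ha : (p:ℤ) ∣ a
    · obtain ⟨a1, rfl⟩ := ha
      have hN1 : ∀ x : ℕ, ((p:ℤ) ^ 2 ∣ (p:ℤ) * a1 - (x:ℤ) * ((p:ℤ) * b1)) ↔
          ((p:ℤ) ∣ a1 - (x:ℤ) * b1) := by
        intro x
        rw [show (p:ℤ) * a1 - (x:ℤ) * ((p:ℤ) * b1) = (p:ℤ) * (a1 - (x:ℤ) * b1) by ring, pow_two]
        exact mul_dvd_mul_iff_left hp0
      have hN2 : ∀ y : ℕ, ((p:ℤ) ^ 2 ∣ (p:ℤ) * (y:ℤ) * ((p:ℤ) * a1) - (p:ℤ) * b1) ↔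
          ((p:ℤ) ∣ (y:ℤ) * ((p:ℤ) * a1) - b1) := by
        intro y
        rw [show (p:ℤ) * (y:ℤ) * ((p:ℤ) * a1) - (p:ℤ) * b1
            = (p:ℤ) * ((y:ℤ) * ((p:ℤ) * a1) - b1) by ring, pow_two]
        exact mul_dvd_mul_iff_left hp0
      have hya : ∀ y : ℕ, (p:ℤ) ∣ (y:ℤ) * ((p:ℤ) * a1) := fun y => ⟨(y:ℤ) * a1, by ring⟩
      have hc1 : (p:ℤ) ∣ (p:ℤ) * a1 ∧ (p:ℤ) ∣ (p:ℤ) * b1 :=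
        ⟨dvd_mul_right _ _, dvd_mul_right _ _⟩
      by_cases hb1 : (p:ℤ) ∣ b1
      · by_cases ha1 : (p:ℤ) ∣ a1
        · -- case 3c : all of both
          have e1 : (∑ x ∈ Finset.range (p ^ 2),
              if (p:ℤ) ^ 2 ∣ (p:ℤ) * a1 - (x:ℤ) * ((p:ℤ) * b1) then 1 else 0 : ℕ) = p ^ 2 := by
            calc _ = ∑ _x ∈ Finset.range (p ^ 2), 1 :=
                  Finset.sum_congr rfl fun x _ => by
                    rw [if_pos ((hN1 x).mpr (dvd_sub ha1 (hb1.mul_left _)))]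
              _ = p ^ 2 := by simp
          have e2 : (∑ y ∈ Finset.range p,
              if (p:ℤ) ^ 2 ∣ (p:ℤ) * (y:ℤ) * ((p:ℤ) * a1) - (p:ℤ) * b1 then 1 else 0 : ℕ) = p := by
            calc _ = ∑ _y ∈ Finset.range p, 1 :=
                  Finset.sum_congr rfl fun y _ => by
                    rw [if_pos ((hN2 y).mpr (dvd_sub (hya y) hb1))]
              _ = p := by simp
          rw [e1, e2, if_pos hc1, if_pos ⟨by rw [pow_two]; exact mul_dvd_mul_left _ ha1,
            by rw [pow_two]; exact mul_dvd_mul_left _ hb1⟩]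
          omega
        · -- case 3b : N1 = 0, N2 = p
          have e1 : (∑ x ∈ Finset.range (p ^ 2),
              if (p:ℤ) ^ 2 ∣ (p:ℤ) * a1 - (x:ℤ) * ((p:ℤ) * b1) then 1 else 0 : ℕ) = 0 := by
            refine Finset.sum_eq_zero fun x _ => ?_
            rw [if_neg]
            intro h
            have h' := (hN1 x).mp h
            exact ha1 (by simpa using dvd_add h' (hb1.mul_left (x:ℤ)))
          have e2 : (∑ y ∈ Finset.range p,
              if (p:ℤ) ^ 2 ∣ (p:ℤ) * (y:ℤ) * ((p:ℤ) * a1) - (p:ℤ) * b1 then 1 else 0 : ℕ) = p := by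
            calc _ = ∑ _y ∈ Finset.range p, 1 :=
                  Finset.sum_congr rfl fun y _ => by
                    rw [if_pos ((hN2 y).mpr (dvd_sub (hya y) hb1))]
              _ = p := by simp
          have hc2 : ¬ ((p:ℤ) ^ 2 ∣ (p:ℤ) * a1 ∧ (p:ℤ) ^ 2 ∣ (p:ℤ) * b1) := by
            rintro ⟨h1, -⟩
            exact ha1 ((mul_dvd_mul_iff_left hp0).mp (by rwa [← pow_two]))
          rw [e1, e2, if_pos hc1, if_neg hc2]
          omega
      · -- case 3a : N1 = p, N2 = 0
        have e2 : (∑ y ∈ Finset.range p,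
            if (p:ℤ) ^ 2 ∣ (p:ℤ) * (y:ℤ) * ((p:ℤ) * a1) - (p:ℤ) * b1 then 1 else 0 : ℕ) = 0 := by
          refine Finset.sum_eq_zero fun y _ => ?_
          rw [if_neg]
          intro h
          have h' := (hN2 y).mp h
          exact hb1 (by simpa using dvd_sub (hya y) h')
        have e1 : (∑ x ∈ Finset.range (p ^ 2),
            if (p:ℤ) ^ 2 ∣ (p:ℤ) * a1 - (x:ℤ) * ((p:ℤ) * b1) then 1 else 0 : ℕ) = p := by
          have hrw : (∑ x ∈ Finset.range (p ^ 2),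
              if (p:ℤ) ^ 2 ∣ (p:ℤ) * a1 - (x:ℤ) * ((p:ℤ) * b1) then 1 else 0 : ℕ)
              = ∑ x ∈ Finset.range (p * p),
                (fun x : ℕ => if (p:ℤ) ∣ a1 - (x:ℤ) * b1 then 1 else 0) x := by
            rw [show p ^ 2 = p * p from pow_two p]
            exact Finset.sum_congr rfl fun x _ => by simp only [hN1 x]
          rw [hrw, sum_range_mul_periodic _ p p ?hper, count_unique p a1 b1
            (isUnit_cast ((hpp.coprime_iff_not_dvd.mpr hb1).symm)), mul_one]
          case hper =>
            intro x
            have hiff : ((p:ℤ) ∣ a1 - ((x + p : ℕ):ℤ) * b1) ↔ ((p:ℤ) ∣ a1 - (x:ℤ) * b1) := by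
              rw [show a1 - ((x + p : ℕ):ℤ) * b1 = (a1 - (x:ℤ) * b1) + (p:ℤ) * (-b1) by
                push_cast; ring]
              exact dvd_add_left ⟨-b1, rfl⟩
            simp only [hiff]
        have hc2 : ¬ ((p:ℤ) ^ 2 ∣ (p:ℤ) * a1 ∧ (p:ℤ) ^ 2 ∣ (p:ℤ) * b1) := by
          rintro ⟨-, h2⟩
          exact hb1 ((mul_dvd_mul_iff_left hp0).mp (by rwa [← pow_two]))
        rw [e1, e2, if_pos hc1, if_neg hc2]
        omega
    · -- case 2 : p ∣ b, p ∤ a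
      have e1 : (∑ x ∈ Finset.range (p ^ 2),
          if (p:ℤ) ^ 2 ∣ a - (x:ℤ) * ((p:ℤ) * b1) then 1 else 0 : ℕ) = 0 := by
        refine Finset.sum_eq_zero fun x _ => ?_
        rw [if_neg]
        intro h
        have hdp : (p:ℤ) ∣ a - (x:ℤ) * ((p:ℤ) * b1) :=
          dvd_trans (by rw [pow_two]; exact dvd_mul_right _ _) h
        exact ha (by simpa using dvd_add hdp (⟨(x:ℤ) * b1, by ring⟩ : (p:ℤ) ∣ (x:ℤ) * ((p:ℤ) * b1)))
      have e2 : (∑ y ∈ Finset.range p,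
          if (p:ℤ) ^ 2 ∣ (p:ℤ) * (y:ℤ) * a - (p:ℤ) * b1 then 1 else 0 : ℕ) = 1 := by
        have hrw : ∀ y : ℕ, ((p:ℤ) ^ 2 ∣ (p:ℤ) * (y:ℤ) * a - (p:ℤ) * b1)
            = ((p:ℤ) ∣ b1 - (y:ℤ) * a) := by
          intro y
          refine propext ?_
          rw [show (p:ℤ) * (y:ℤ) * a - (p:ℤ) * b1 = (p:ℤ) * ((y:ℤ) * a - b1) by ring, pow_two,
            mul_dvd_mul_iff_left hp0, dvd_sub_comm]
        simp only [hrw]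
        exact count_unique p b1 a (isUnit_cast ((hpp.coprime_iff_not_dvd.mpr ha).symm))
      have hc1 : ¬ ((p:ℤ) ∣ a ∧ (p:ℤ) ∣ (p:ℤ) * b1) := fun h => ha h.1
      have hc2 : ¬ ((p:ℤ) ^ 2 ∣ a ∧ (p:ℤ) ^ 2 ∣ (p:ℤ) * b1) := by
        rintro ⟨h1, -⟩
        exact ha (dvd_trans (by rw [pow_two]; exact dvd_mul_right _ _) h1)
      rw [e1, e2, if_neg hc1, if_neg hc2]
  · -- case 1 : p ∤ b
    have e1 : (∑ x ∈ Finset.range (p ^ 2),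
        if (p:ℤ) ^ 2 ∣ a - (x:ℤ) * b then 1 else 0 : ℕ) = 1 := by
      have hcast : ((p ^ 2 : ℕ):ℤ) = (p:ℤ) ^ 2 := by push_cast; ring
      have hco : IsCoprime (b : ℤ) ((p ^ 2 : ℕ):ℤ) := by
        rw [hcast]
        exact ((hpp.coprime_iff_not_dvd.mpr hb).symm).pow_right
      have := count_unique (p ^ 2) a b (isUnit_cast hco)
      rw [hcast] at this
      exact this
    have e2 : (∑ y ∈ Finset.range p,
        if (p:ℤ) ^ 2 ∣ (p:ℤ) * (y:ℤ) * a - b then 1 else 0 : ℕ) = 0 := by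
      refine Finset.sum_eq_zero fun y _ => ?_
      rw [if_neg]
      intro h
      have hdp : (p:ℤ) ∣ (p:ℤ) * (y:ℤ) * a - b :=
        dvd_trans (by rw [pow_two]; exact dvd_mul_right _ _) h
      exact hb (by simpa using dvd_sub (⟨(y:ℤ) * a, by ring⟩ : (p:ℤ) ∣ (p:ℤ) * (y:ℤ) * a) hdp)
    have hc1 : ¬ ((p:ℤ) ∣ a ∧ (p:ℤ) ∣ b) := fun h => hb h.2
    have hc2 : ¬ ((p:ℤ) ^ 2 ∣ a ∧ (p:ℤ) ^ 2 ∣ b) := by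
      rintro ⟨-, h2⟩
      exact hb (dvd_trans (by rw [pow_two]; exact dvd_mul_right _ _) h2)
    rw [e1, e2, if_neg hc1, if_neg hc2]

open Classical in
lemma pointwise (p : ℕ) (hp : p.Prime) (a b : ℤ) (z : ℂ) :
    (∑ i : Fin (p ^ 2 + p), if Ct p (i : ℕ) a b then z else 0)
      = z + ((p:ℂ) - 1) * (if (p:ℤ) ∣ a ∧ (p:ℤ) ∣ b then z else 0)
          + (p:ℂ) ^ 2 * (if (p:ℤ) ^ 2 ∣ a ∧ (p:ℤ) ^ 2 ∣ b then z else 0) := by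
  classical
  have key : (∑ x ∈ Finset.range (p ^ 2 + p), if Ct p x a b then 1 else 0 : ℕ)
      = 1 + (if (p:ℤ) ∣ a ∧ (p:ℤ) ∣ b then p - 1 else 0)
          + (if (p:ℤ) ^ 2 ∣ a ∧ (p:ℤ) ^ 2 ∣ b then p ^ 2 else 0) := by
    rw [Finset.sum_range_add]
    have e1 : (∑ x ∈ Finset.range (p ^ 2), if Ct p x a b then 1 else 0 : ℕ)
        = ∑ x ∈ Finset.range (p ^ 2), if (p:ℤ) ^ 2 ∣ a - (x:ℤ) * b then 1 else 0 :=
      Finset.sum_congr rfl fun x hx => by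
        simp only [Ct, if_pos (Finset.mem_range.mp hx)]
    have e2 : (∑ y ∈ Finset.range p, if Ct p (p ^ 2 + y) a b then 1 else 0 : ℕ)
        = ∑ y ∈ Finset.range p, if (p:ℤ) ^ 2 ∣ (p:ℤ) * (y:ℤ) * a - b then 1 else 0 :=
      Finset.sum_congr rfl fun y _ => by
        have h1 : ¬ (p ^ 2 + y < p ^ 2) := by omega
        have h2 : (p:ℤ) * (((p ^ 2 + y : ℕ):ℤ) - (p:ℤ) ^ 2) * a - b = (p:ℤ) * (y:ℤ) * a - b := by
          push_cast; ring
        simp only [Ct, if_neg h1, h2]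
    rw [e1, e2, count_total p hp a b]
  have hcast : (∑ i : Fin (p ^ 2 + p), if Ct p (i : ℕ) a b then (1:ℂ) else 0)
      = (((∑ x ∈ Finset.range (p ^ 2 + p), if Ct p x a b then 1 else 0 : ℕ)) : ℂ) := by
    rw [Fin.sum_univ_eq_sum_range (fun x => if Ct p x a b then (1:ℂ) else 0) (p ^ 2 + p),
      Nat.cast_sum]
    exact Finset.sum_congr rfl fun x _ => by split <;> simp
  calc (∑ i : Fin (p ^ 2 + p), if Ct p (i : ℕ) a b then z else 0)
      = ∑ i : Fin (p ^ 2 + p), (if Ct p (i : ℕ) a b then (1:ℂ) else 0) * z :=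
        Finset.sum_congr rfl fun i _ => by split <;> simp
    _ = (∑ i : Fin (p ^ 2 + p), if Ct p (i : ℕ) a b then (1:ℂ) else 0) * z := by
        rw [Finset.sum_mul]
    _ = (((∑ x ∈ Finset.range (p ^ 2 + p), if Ct p x a b then 1 else 0 : ℕ)) : ℂ) * z := by
        rw [hcast]
    _ = _ := by
        rw [key]
        by_cases h1 : ((p:ℤ) ∣ a ∧ (p:ℤ) ∣ b)
        · by_cases h2 : ((p:ℤ) ^ 2 ∣ a ∧ (p:ℤ) ^ 2 ∣ b)
          · rw [if_pos h1, if_pos h2, if_pos h1, if_pos h2]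
            push_cast [Nat.cast_sub hp.one_lt.le]
            ring
          · rw [if_pos h1, if_neg h2, if_pos h1, if_neg h2]
            push_cast [Nat.cast_sub hp.one_lt.le]
            ring
        · have h2 : ¬ ((p:ℤ) ^ 2 ∣ a ∧ (p:ℤ) ^ 2 ∣ b) := by
            rintro ⟨h2a, h2b⟩
            exact h1 ⟨(dvd_pow_self (p:ℤ) two_ne_zero).trans h2a,
              (dvd_pow_self (p:ℤ) two_ne_zero).trans h2b⟩
          rw [if_neg h1, if_neg h2, if_neg h1, if_neg h2]
          push_cast
          ring

/-- `Σ_{A ∈ L(p²)} Σ_{λ ∈ M} F(ᵗA λ) = Σ_λ F(λ) + (p-1) Σ_λ F(λ·diag(p,1)) + p² Σ_λ F(λ·diag(p²,1))`,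
where `M = { λ ∈ ℤ^{2×2} : λ₁₁ ∈ p²ℤ }` and all sums converge absolutely. -/
theorem statement_3 (p : ℕ) (hp : p.Prime)
    (F : Matrix (Fin 2) (Fin 2) ℤ → ℂ)
    (hF : Summable F)
    (hF1 : ∀ i : Fin (p ^ 2 + p),
      Summable (fun lam : {l : Matrix (Fin 2) (Fin 2) ℤ // (p : ℤ) ^ 2 ∣ l 0 0} =>
        F ((Lp2 p i)ᵀ * lam.1)))
    (hF2 : Summable (fun lam : Matrix (Fin 2) (Fin 2) ℤ => F (lam * !![(p : ℤ), 0; 0, 1])))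
    (hF3 : Summable (fun lam : Matrix (Fin 2) (Fin 2) ℤ =>
      F (lam * !![(p : ℤ) ^ 2, 0; 0, 1]))) :
    ∑ i : Fin (p ^ 2 + p), ∑' lam : {l : Matrix (Fin 2) (Fin 2) ℤ // (p : ℤ) ^ 2 ∣ l 0 0},
        F ((Lp2 p i)ᵀ * lam.1)
      = (∑' lam : Matrix (Fin 2) (Fin 2) ℤ, F lam)
        + ((p : ℂ) - 1) * (∑' lam : Matrix (Fin 2) (Fin 2) ℤ, F (lam * !![(p : ℤ), 0; 0, 1]))
        + (p : ℂ) ^ 2 *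
            ∑' lam : Matrix (Fin 2) (Fin 2) ℤ, F (lam * !![(p : ℤ) ^ 2, 0; 0, 1]) := by
  classical
  have hp0 : (p : ℤ) ≠ 0 := by exact_mod_cast hp.pos.ne'
  have hL : (∑ i : Fin (p ^ 2 + p),
        ∑' lam : {l : Matrix (Fin 2) (Fin 2) ℤ // (p : ℤ) ^ 2 ∣ l 0 0},
          F ((Lp2 p i)ᵀ * lam.1))
      = ∑ i : Fin (p ^ 2 + p), ∑' μ : M2,
          if Ct p (i : ℕ) (μ 0 0) (μ 1 0) then F μ else 0 :=
    Finset.sum_congr rfl fun i _ => inner_eq p F i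
  have hs1 : Summable (fun μ : M2 =>
      ((p : ℂ) - 1) * if (p:ℤ) ∣ μ 0 0 ∧ (p:ℤ) ∣ μ 1 0 then F μ else 0) :=
    Summable.mul_left _ (summable_ite hF (fun μ => (p:ℤ) ∣ μ 0 0 ∧ (p:ℤ) ∣ μ 1 0))
  have hs2 : Summable (fun μ : M2 =>
      (p : ℂ) ^ 2 * if (p:ℤ) ^ 2 ∣ μ 0 0 ∧ (p:ℤ) ^ 2 ∣ μ 1 0 then F μ else 0) :=
    Summable.mul_left _ (summable_ite hF (fun μ => (p:ℤ) ^ 2 ∣ μ 0 0 ∧ (p:ℤ) ^ 2 ∣ μ 1 0))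
  rw [hL, ← Summable.tsum_finsetSum (fun (i : Fin (p ^ 2 + p)) (_ : i ∈ Finset.univ) =>
      summable_ite hF (fun μ => Ct p (i : ℕ) (μ 0 0) (μ 1 0))), tsum_diag F (p : ℤ) hp0,
    tsum_diag F ((p : ℤ) ^ 2) (pow_ne_zero 2 hp0), ← tsum_mul_left, ← tsum_mul_left,
    ← Summable.tsum_add hF hs1, ← Summable.tsum_add (hF.add hs1) hs2]
  exact tsum_congr fun μ => pointwise p hp (μ 0 0) (μ 1 0) (F μ)
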